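/- Let (rₙ) be positive reals with ∑ₙ 2rₙ ≤ a < 1, let {qₙ} enumerate ℚ ∩ [0,1], let F = [0,1] \ ⋃ₙ(qₙ−rₙ, qₙ+rₙ), and let 𝔮(x) = ∫_0^x d_F(z)dz with d_F the distance to F. Then the pushforward of Lebesgue measure under 𝔮^{-1}, restricted to 𝔮(ℝ), assigns positive mass to 𝔮(F'), for any Borel subset F' ⊂ F with λ(F') > 0; equivalently, the measure ν(dx) := 1_F(x) λ(dx) on ℝ is a nonzero measure concentrated on the zero set of 𝔮'. -/

import Mathlib

open MeasureTheory Set intervalIntegral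
open scoped ENNReal

/-- Let `F = [0,1] \ ⋃ₙ (qₙ−rₙ, qₙ+rₙ)` be a fat-Cantor-type set
(`λ F ≥ 1 − a > 0`) and `𝔮(x) = ∫_0^x d_F(z) dz`. Then `𝔮' = d_F` vanishes exactly on `F`,
the measure `ν(dx) = 1_F(x) λ(dx)` is nonzero and concentrated on the zero set of `𝔮'`, and
(for the pushforward of `λ` under `𝔮⁻¹`) every Borel `F' ⊆ F` with `λ F' > 0` satisfies
`λ(𝔮⁻¹(𝔮(F'))) > 0`. -/
theorem stmt16
    (qe : ℕ → ℝ)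
    (hqe : Set.range qe = {x : ℝ | x ∈ Icc (0:ℝ) 1 ∧ ∃ s : ℚ, (s : ℝ) = x})
    (a : ℝ) (ha0 : 0 < a) (ha1 : a < 1)
    (r : ℕ → ℝ) (hr : ∀ n, 0 < r n)
    (hsummable : Summable (fun n => 2 * r n))
    (hsum : (∑' n, 2 * r n) ≤ a)
    (F : Set ℝ) (hF : F = Icc (0:ℝ) 1 \ ⋃ n, Ioo (qe n - r n) (qe n + r n))
    (q : ℝ → ℝ) (hq : q = fun x => ∫ z in (0:ℝ)..x, Metric.infDist z F) :
    (∀ x : ℝ, HasDerivAt q (Metric.infDist x F) x) ∧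
    {x : ℝ | Metric.infDist x F = 0} = F ∧
    volume.restrict F ≠ 0 ∧
    (volume.restrict F) {x : ℝ | Metric.infDist x F ≠ 0} = 0 ∧
    (∀ F' : Set ℝ, F' ⊆ F → MeasurableSet F' → 0 < volume F' →
      0 < volume (q ⁻¹' (q '' F'))) := by
  -- F is closed
  have hFclosed : IsClosed F := by
    rw [hF]
    exact isClosed_Icc.sdiff (isOpen_iUnion fun n => isOpen_Ioo)
  set U : Set ℝ := ⋃ n, Ioo (qe n - r n) (qe n + r n) with hU_def
  -- volume of the union of intervals is at most `a`
  have hU : volume U ≤ ENNReal.ofReal a := by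
    calc volume U ≤ ∑' n, volume (Ioo (qe n - r n) (qe n + r n)) := measure_iUnion_le _
      _ = ∑' n, ENNReal.ofReal (2 * r n) := by
          congr 1; funext n; rw [Real.volume_Ioo]; congr 1; ring
      _ = ENNReal.ofReal (∑' n, 2 * r n) :=
          (ENNReal.ofReal_tsum_of_nonneg (fun n => by have := hr n; positivity) hsummable).symm
      _ ≤ ENNReal.ofReal a := ENNReal.ofReal_le_ofReal hsum
  have haone : ENNReal.ofReal a < 1 := by
    rw [← ENNReal.ofReal_one]
    exact (ENNReal.ofReal_lt_ofReal_iff_of_nonneg ha0.le).mpr ha1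
  -- F has positive measure
  have h1 : (1 : ℝ≥0∞) ≤ volume F + ENNReal.ofReal a := by
    calc (1 : ℝ≥0∞) = volume (Icc (0:ℝ) 1) := by simp
      _ ≤ volume (F ∪ U) := measure_mono (by rw [hF]; exact subset_diff_union _ _)
      _ ≤ volume F + volume U := measure_union_le _ _
      _ ≤ volume F + ENNReal.ofReal a := add_le_add le_rfl hU
  have hFpos : 0 < volume F := by
    rcases eq_or_ne (volume F) 0 with h | h
    · rw [h, zero_add] at h1
      exact absurd h1 (not_le.mpr haone)
    · exact pos_iff_ne_zero.mpr h
  have hFne : F.Nonempty := by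
    rcases F.eq_empty_or_nonempty with h | h
    · rw [h] at hFpos; simp at hFpos
    · exact h
  -- the zero set of infDist is F
  have hzero : {x : ℝ | Metric.infDist x F = 0} = F := by
    ext x
    exact ⟨fun h => (hFclosed.mem_iff_infDist_zero hFne).mpr h,
      fun h => (hFclosed.mem_iff_infDist_zero hFne).mp h⟩
  refine ⟨?_, hzero, ?_, ?_, ?_⟩
  · intro x
    rw [hq]
    exact ((Metric.continuous_infDist_pt F).integral_hasStrictDerivAt 0 x).hasDerivAt
  · intro h
    rw [Measure.restrict_eq_zero] at h
    exact hFpos.ne' h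
  · have : {x : ℝ | Metric.infDist x F ≠ 0} = Fᶜ := by
      ext x
      exact not_congr (Iff.symm (hFclosed.mem_iff_infDist_zero hFne))
    rw [this, Measure.restrict_apply hFclosed.measurableSet.compl]
    simp
  · intro F' hsub hmeas hpos
    exact hpos.trans_le (measure_mono (subset_preimage_image q F'))
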